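/- Let X, Y be locally finite metric spaces, and Φ : C_ν(X) → C_ν(Y) a trivial unital *-homomorphism induced by φ : Y → X, i.e., for every A ⊆ Y and every positive contraction g ∈ C_h(X), ‖π_Y(χ_A)·Φ(π_X(g))‖ = ‖π_X(χ_{φ[A]}·g)‖. Then φ is proper: the preimage under φ of every finite subset of X is finite. -/

import Mathlib

def SlowlyOscillating {X : Type*} [MetricSpace X] (f : X → ℂ) : Prop :=
  (∃ C : ℝ, ∀ x, ‖f x‖ ≤ C) ∧
  ∀ ε : ℝ, 0 < ε → ∀ R : ℝ, 0 < R → ∃ F : Set X, F.Finite ∧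
    ∀ x x', x ∉ F → x' ∉ F → dist x x' ≤ R → ‖f x - f x'‖ < ε

/-- Membership in `C_0(X)`: vanishing at infinity. -/
def VanishesAtInfinity {X : Type*} (f : X → ℂ) : Prop :=
  ∀ ε : ℝ, 0 < ε → {x : X | ε ≤ ‖f x‖}.Finite

/-- The norm of the image of a bounded function in the quotient `ℓ∞/c₀`:
the least `c ≥ 0` such that `{x : |h x| ≥ c + ε}` is finite for every `ε > 0`. -/
noncomputable def qnorm {X : Type*} (h : X → ℂ) : ℝ :=
  sInf {c : ℝ | 0 ≤ c ∧ ∀ ε : ℝ, 0 < ε → {x : X | c + ε ≤ ‖h x‖}.Finite}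

lemma qnorm_zero_of_finite_support {X : Type*} (h : X → ℂ) (S : Set X)
    (hS : S.Finite) (hsupp : ∀ x, x ∉ S → h x = 0) : qnorm h = 0 := by
  have h0 : (0:ℝ) ∈ {c : ℝ | 0 ≤ c ∧ ∀ ε : ℝ, 0 < ε → {x : X | c + ε ≤ ‖h x‖}.Finite} := by
    refine ⟨le_refl 0, fun ε hε => hS.subset ?_⟩
    intro x hx
    by_contra hxS
    simp only [Set.mem_setOf_eq, hsupp x hxS, norm_zero, zero_add] at hx
    linarith
  exact le_antisymm (csInf_le ⟨0, fun c hc => hc.1⟩ h0) (le_csInf ⟨0, h0⟩ fun c hc => hc.1)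

/-- If `Φ : C_ν(X) → C_ν(Y)` is a trivial unital *-homomorphism induced by `φ : Y → X`
(for every `A ⊆ Y` and positive contraction `g ∈ C_h(X)`,
`‖π_Y(χ_A)·Φ(π_X(g))‖ = ‖π_X(χ_{φ[A]}·g)‖`), then `φ` is proper: preimages of finite
sets are finite.  Here `Φ` is represented by a map on lifts, which descends to a unital
*-homomorphism on the quotients. -/
theorem trivial_hom_proper {X Y : Type*} [MetricSpace X] [MetricSpace Y]
    (hX : ∀ (x : X) (r : ℝ), (Metric.closedBall x r).Finite)
    (hY : ∀ (y : Y) (r : ℝ), (Metric.closedBall y r).Finite)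
    (φ : Y → X) (Φ : (X → ℂ) → (Y → ℂ))
    -- Φ maps (lifts of) C_ν(X) to C_ν(Y):
    (hmaps : ∀ g : X → ℂ, SlowlyOscillating g → SlowlyOscillating (Φ g))
    -- Φ is well defined on the quotient by C_0:
    (hwd : ∀ g g' : X → ℂ, SlowlyOscillating g → SlowlyOscillating g' →
      VanishesAtInfinity (fun x => g x - g' x) →
      VanishesAtInfinity (fun y => Φ g y - Φ g' y))
    -- Φ is additive, multiplicative, and *-preserving modulo C_0:
    (hadd : ∀ g g' : X → ℂ, SlowlyOscillating g → SlowlyOscillating g' →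
      VanishesAtInfinity (fun y => Φ (g + g') y - (Φ g y + Φ g' y)))
    (hmul : ∀ g g' : X → ℂ, SlowlyOscillating g → SlowlyOscillating g' →
      VanishesAtInfinity (fun y => Φ (g * g') y - Φ g y * Φ g' y))
    (hstar : ∀ g : X → ℂ, SlowlyOscillating g →
      VanishesAtInfinity (fun y => Φ (fun x => starRingEnd ℂ (g x)) y - starRingEnd ℂ (Φ g y)))
    -- Φ is unital:
    (hunital : VanishesAtInfinity (fun y => Φ (fun _ => 1) y - 1))
    -- Φ is trivial, induced by φ:
    (htrivial : ∀ (A : Set Y) (g : X → ℂ), SlowlyOscillating g →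
      (∀ x, (g x).im = 0 ∧ 0 ≤ (g x).re ∧ (g x).re ≤ 1) →
      qnorm (fun y => A.indicator (fun _ => (1 : ℂ)) y * Φ g y) =
        qnorm (fun x => (φ '' A).indicator (fun _ => (1 : ℂ)) x * g x)) :
    ∀ F : Set X, F.Finite → (φ ⁻¹' F).Finite := by
  intro F hF
  by_contra hA
  set A : Set Y := φ ⁻¹' F with hAdef
  have so1 : SlowlyOscillating (fun _ : X => (1:ℂ)) :=
    ⟨⟨1, fun x => by simp⟩, fun ε hε R hR =>
      ⟨∅, Set.finite_empty, fun x x' _ _ _ => by simpa using hε⟩⟩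
  have key := htrivial A (fun _ => 1) so1 (fun x => by norm_num)
  -- Right-hand side is zero: the function is supported on the finite set `F`.
  have hRHS : qnorm (fun x => (φ '' A).indicator (fun _ => (1:ℂ)) x * (fun _ : X => (1:ℂ)) x) = 0 := by
    refine qnorm_zero_of_finite_support _ F hF fun x hx => ?_
    have : x ∉ φ '' A := fun hmem => hx (Set.image_preimage_subset φ F hmem)
    simp [Set.indicator_of_notMem this]
  rw [hRHS] at key
  -- Left-hand side is at least 1/2, since `A` is infinite and `Φ 1 ≈ 1`.
  have hG : {y : Y | (1:ℝ)/2 ≤ ‖Φ (fun _ => 1) y - 1‖}.Finite :=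
    hunital (1/2) (by norm_num)
  -- the qnorm set for the LHS
  set S := {c : ℝ | 0 ≤ c ∧ ∀ ε : ℝ, 0 < ε →
      {y : Y | c + ε ≤ ‖A.indicator (fun _ => (1:ℂ)) y * Φ (fun _ => 1) y‖}.Finite} with hSdef
  obtain ⟨⟨C, hC⟩, -⟩ := hmaps (fun _ => 1) so1
  have hCS : max C 0 ∈ S := by
    refine ⟨le_max_right _ _, fun ε hε => ?_⟩
    have : {y : Y | max C 0 + ε ≤ ‖A.indicator (fun _ => (1:ℂ)) y * Φ (fun _ => 1) y‖} = ∅ := by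
      ext y
      simp only [Set.mem_setOf_eq, Set.mem_empty_iff_false, iff_false, not_le, norm_mul]
      have h1 : ‖A.indicator (fun _ => (1:ℂ)) y‖ ≤ 1 := by
        by_cases hy : y ∈ A <;> simp [Set.indicator_apply, hy]
      calc ‖A.indicator (fun _ => (1:ℂ)) y‖ * ‖Φ (fun _ => 1) y‖
          ≤ 1 * C := mul_le_mul h1 (hC y) (norm_nonneg _) zero_le_one
        _ = C := one_mul C
        _ < max C 0 + ε := by have := le_max_left C 0; linarith
    rw [this]; exact Set.finite_empty
  have hhalf : (1:ℝ)/2 ≤ qnorm (fun y => A.indicator (fun _ => (1:ℂ)) y * Φ (fun _ => 1) y) := by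
    refine le_csInf ⟨max C 0, hCS⟩ fun c hc => ?_
    by_contra hlt
    push_neg at hlt
    have hεpos : (0:ℝ) < 1/2 - c := by linarith
    have hfin := hc.2 (1/2 - c) hεpos
    have hAsub : A ⊆ {y : Y | c + (1/2 - c) ≤ ‖A.indicator (fun _ => (1:ℂ)) y * Φ (fun _ => 1) y‖}
        ∪ {y : Y | (1:ℝ)/2 ≤ ‖Φ (fun _ => 1) y - 1‖} := by
      intro y hy
      by_cases hG' : (1:ℝ)/2 ≤ ‖Φ (fun _ => 1) y - 1‖
      · exact Or.inr hG'
      · left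
        push_neg at hG'
        have h1 : ‖Φ (fun _ => 1) y‖ ≥ 1/2 := by
          have htri := norm_add_le ((1:ℂ) - Φ (fun _ => 1) y) (Φ (fun _ => 1) y)
          simp only [sub_add_cancel, norm_one, norm_sub_rev (1:ℂ)] at htri
          linarith
        have hind : A.indicator (fun _ => (1:ℂ)) y = 1 := Set.indicator_of_mem hy _
        simp only [Set.mem_setOf_eq, hind, one_mul]
        linarith
    exact hA (((hfin.union hG).subset hAsub))
  rw [key] at hhalf
  linarith
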